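/- Let L = F_{q^{2n}}, M = F_{q^n}, F = F_q, i ∈ L \ M, and a, b ∈ M*. Let S_a = {F(c(a+i)) : c ∈ M*} and S_b^φ = {F(d^q b^q + d i) : d ∈ M*}. Then S_a ∩ S_b^φ contains at most one point; equivalently, if c(a+i) and d^q b^q + d i span the same F-line and c'(a+i) and (d')^q b^q + d' i span the same F-line, then F(c(a+i)) = F(c'(a+i)). -/

import Mathlib

/-- Linear independence of `1, i` over `M` when `i ∉ M`. -/
lemma aux_indep {L : Type*} [Field L] (M : Subfield L) (i : L) (hi : i ∉ M)
    {x y x' y' : L} (hx : x ∈ M) (hy : y ∈ M) (hx' : x' ∈ M) (hy' : y' ∈ M)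
    (h : x + y * i = x' + y' * i) : x = x' ∧ y = y' := by
  by_cases hyy : y = y'
  · subst hyy
    exact ⟨add_right_cancel h, rfl⟩
  · exfalso
    have hne : y' - y ≠ 0 := sub_ne_zero.mpr (Ne.symm hyy)
    have hii : i = (x - x') / (y' - y) := by
      rw [eq_div_iff hne]; linear_combination -h
    exact hi (hii ▸ M.div_mem (M.sub_mem hx hx') (M.sub_mem hy' hy))

/-- Every `(q-1)`-th root of unity in `L` lies in the subfield `F` of order `q`. -/
lemma aux_root {L : Type*} [Field L] [Fintype L] {q : ℕ} (hq : 2 ≤ q)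
    (F : Subfield L) (hF : Nat.card F = q) {x : L} (hx : x ^ (q - 1) = 1) : x ∈ F := by
  classical
  haveI : Fintype F := Fintype.ofFinite F
  have hcardF : Fintype.card F = q := by rw [← Nat.card_eq_fintype_card, hF]
  have hq1 : 0 < q - 1 := by omega
  set T := Polynomial.nthRootsFinset (q - 1) (1 : L) with hT
  set S : Finset L := (Set.toFinset (F : Set L)).erase 0 with hS
  have hsub : S ⊆ T := by
    intro z hz
    rw [hS, Finset.mem_erase, Set.mem_toFinset] at hz
    obtain ⟨hz0, hzF⟩ := hz
    rw [hT, Polynomial.mem_nthRootsFinset hq1]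
    have h1 : (⟨z, hzF⟩ : F) ^ (Fintype.card F - 1) = 1 :=
      FiniteField.pow_card_sub_one_eq_one _ (by simp [Subtype.ext_iff, hz0])
    rw [hcardF] at h1
    have := congrArg (fun t : F => (t : L)) h1
    simpa using this
  have hScard : S.card = q - 1 := by
    rw [hS, Finset.card_erase_of_mem (by simp [F.zero_mem]), Set.toFinset_card]
    rw [show Fintype.card (F : Set L) = q from by rw [← Nat.card_eq_fintype_card]; simpa using hF]
  have hTcard : T.card ≤ q - 1 := by
    calc T.card ≤ Multiset.card (Polynomial.nthRoots (q-1) (1:L)) := Multiset.toFinset_card_le _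
    _ ≤ q - 1 := Polynomial.card_nthRoots _ _
  have heq : S = T := Finset.eq_of_subset_of_card_le hsub (by omega)
  have hxT : x ∈ T := by rw [hT, Polynomial.mem_nthRootsFinset hq1]; exact hx
  rw [← heq, hS, Finset.mem_erase, Set.mem_toFinset] at hxT
  exact hxT.2

theorem stmt13 (q n : ℕ) (hq : IsPrimePow q) (hn : 2 ≤ n)
    (L : Type*) [Field L] [Fintype L] (F M : Subfield L) (hFM : F ≤ M)
    (hL : Nat.card L = q ^ (2 * n)) (hF : Nat.card F = q) (hM : Nat.card M = q ^ n)
    (i : L) (hi : i ∉ M)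
    (a b : L) (haM : a ∈ M) (hbM : b ∈ M) (ha : a ≠ 0) (hb : b ≠ 0) :
    ∀ c c' d d' : L, c ∈ M → c ≠ 0 → c' ∈ M → c' ≠ 0 →
      d ∈ M → d ≠ 0 → d' ∈ M → d' ≠ 0 →
      Submodule.span F {c * (a + i)} = Submodule.span F {d ^ q * b ^ q + d * i} →
      Submodule.span F {c' * (a + i)} = Submodule.span F {d' ^ q * b ^ q + d' * i} →
      Submodule.span F {c * (a + i)} = Submodule.span F {c' * (a + i)} := by
  intro c c' d d' hcM hc hc'M hc' hdM hd hd'M hd' h1 h2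
  have hq2 : 2 ≤ q := hq.two_le
  have key : ∀ cc dd : L, cc ∈ M → dd ∈ M → dd ≠ 0 →
      Submodule.span F {cc * (a + i)} = Submodule.span F {dd ^ q * b ^ q + dd * i} →
      ∃ lam : L, lam ∈ F ∧ lam ≠ 0 ∧ lam * cc = dd ∧ dd * a = dd ^ q * b ^ q := by
    intro cc dd hccM hddM hdd hsp
    have hmem : dd ^ q * b ^ q + dd * i ∈ Submodule.span F {cc * (a + i)} := by
      rw [hsp]; exact Submodule.mem_span_singleton_self _
    obtain ⟨lam, hlam⟩ := Submodule.mem_span_singleton.mp hmem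
    have hlam' : (lam : L) * cc * a + ((lam : L) * cc) * i = dd ^ q * b ^ q + dd * i := by
      have : (lam : L) * (cc * (a + i)) = dd ^ q * b ^ q + dd * i := hlam
      linear_combination this
    obtain ⟨he1, he2⟩ := aux_indep M i hi
      (M.mul_mem (M.mul_mem (hFM lam.2) hccM) haM) (M.mul_mem (hFM lam.2) hccM)
      (M.mul_mem (M.pow_mem hddM q) (M.pow_mem hbM q)) hddM hlam'
    refine ⟨(lam : L), lam.2, ?_, he2, ?_⟩
    · intro h0; rw [h0, zero_mul] at he2; exact hdd he2.symm
    · calc dd * a = (lam : L) * cc * a := by rw [he2]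
      _ = dd ^ q * b ^ q := he1
  obtain ⟨lam, hlamF, hlam0, hlc, hda⟩ := key c d hcM hdM hd h1
  obtain ⟨lam', hlam'F, hlam'0, hlc', hd'a⟩ := key c' d' hc'M hd'M hd' h2
  -- derive d * d'^q = d' * d^q
  have hrel : d * d' ^ q = d' * d ^ q := by
    have e : d * a * d' ^ q = d' * a * d ^ q := by
      calc d * a * d' ^ q = (d ^ q * b ^ q) * d' ^ q := by rw [hda]
      _ = (d' ^ q * b ^ q) * d ^ q := by ring
      _ = d' * a * d ^ q := by rw [hd'a]
    exact mul_left_cancel₀ ha (by linear_combination e)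
  -- t = d / d' is a (q-1)-th root of unity, hence in F
  have hdq : d ^ (q - 1) = d' ^ (q - 1) := by
    have hq1 : q - 1 + 1 = q := by omega
    have : d * d' * d' ^ (q - 1) = d * d' * d ^ (q - 1) := by
      calc d * d' * d' ^ (q - 1) = d * (d' * d' ^ (q-1)) := by ring
      _ = d * d' ^ q := by rw [← pow_succ']; rw [hq1]
      _ = d' * d ^ q := hrel
      _ = d' * (d * d ^ (q-1)) := by rw [← pow_succ']; rw [hq1]
      _ = d * d' * d ^ (q - 1) := by ring
    exact (mul_left_cancel₀ (mul_ne_zero hd hd') this).symm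
  have ht : (d * d'⁻¹) ^ (q - 1) = 1 := by
    rw [mul_pow, hdq, inv_pow, mul_inv_cancel₀ (pow_ne_zero _ hd')]
  have htF : d * d'⁻¹ ∈ F := aux_root hq2 F hF ht
  -- μ = t * lam' * lam⁻¹ ∈ F, c = μ * c'
  set μ : L := (d * d'⁻¹) * lam' * lam⁻¹ with hμ
  have hμF : μ ∈ F := F.mul_mem (F.mul_mem htF hlam'F) (F.inv_mem hlamF)
  have hμ0 : μ ≠ 0 := by
    apply mul_ne_zero (mul_ne_zero (mul_ne_zero hd (inv_ne_zero hd')) hlam'0) (inv_ne_zero hlam0)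
  have hcc' : c = μ * c' := by
    rw [hμ]
    field_simp
    calc c * d' * lam = (lam * c) * d' := by ring
    _ = d * d' := by rw [hlc]
    _ = d * (lam' * c') := by rw [hlc']
    _ = d * lam' * c' := by ring
  -- conclude span equality
  have : c * (a + i) = (⟨μ, hμF⟩ : F) • (c' * (a + i)) := by
    show c * (a + i) = μ * (c' * (a + i))
    rw [hcc']; ring
  rw [this]
  exact Submodule.span_singleton_smul_eq
    (isUnit_iff_ne_zero.mpr (by simp [Subtype.ext_iff, hμ0])) _
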